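/- The function x ↦ g(x·d) is concave in x on [0,1] for each d ≥ 1, where g(c) = Q((Δδ/σ)·√(((1-ρ)c + 2ρ)/(1+ρ)) + Q⁻¹(β)), Δδ < 0, σ > 0, 0 ≤ ρ < 1, 1/2 < β < 1. Consequently the return function v(d,x) = g(x·d) - g(1) is concave in x. -/

import Mathlib

open Real MeasureTheory Set


open Real

/-- The Gaussian tail function `Q(x) = (1/√(2π)) ∫_x^∞ exp(-u²/2) du`. -/
noncomputable def gaussQ (x : ℝ) : ℝ :=
  (Real.sqrt (2 * Real.pi))⁻¹ * ∫ u in Set.Ioi x, Real.exp (-u ^ 2 / 2)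

/-- `g(c) = Q((Δδ/σ)·√(((1-ρ)c + 2ρ)/(1+ρ)) + Q⁻¹(β))`, i.e. `1 - P_FA,CSS(c)`. -/
noncomputable def gFun (Δδ σ ρ Qinvβ c : ℝ) : ℝ :=
  gaussQ (Δδ / σ * Real.sqrt (((1 - ρ) * c + 2 * ρ) / (1 + ρ)) + Qinvβ)

lemma phi_integrable : Integrable (fun u : ℝ => Real.exp (-u ^ 2 / 2)) := by
  have h := integrable_exp_neg_mul_sq (show (0:ℝ) < 1/2 by norm_num)
  convert h using 2 with u
  ring_nf

lemma gaussQ_hasDerivAt (x : ℝ) :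
    HasDerivAt gaussQ (-((Real.sqrt (2 * Real.pi))⁻¹ * Real.exp (-x ^ 2 / 2))) x := by
  set φ : ℝ → ℝ := fun u => Real.exp (-u ^ 2 / 2) with hφ
  have hφc : Continuous φ := by continuity
  have hint : Integrable φ := phi_integrable
  have key : gaussQ = fun y : ℝ =>
      (Real.sqrt (2 * Real.pi))⁻¹ *
        ((∫ u, φ u) - ((∫ u in Iic (0:ℝ), φ u) + ∫ u in (0:ℝ)..y, φ u)) := by
    funext y
    unfold gaussQ
    congr 1
    have h1 : (∫ u in Iic y, φ u) + (∫ u in Ioi y, φ u) = ∫ u, φ u :=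
      intervalIntegral.integral_Iic_add_Ioi hint.integrableOn hint.integrableOn
    have h2 : (∫ u in Iic y, φ u) - (∫ u in Iic (0:ℝ), φ u) = ∫ u in (0:ℝ)..y, φ u :=
      intervalIntegral.integral_Iic_sub_Iic hint.integrableOn hint.integrableOn
    linarith
  rw [key]
  have hFTC : HasDerivAt (fun y : ℝ => ∫ u in (0:ℝ)..y, φ u) (φ x) x :=
    intervalIntegral.integral_hasDerivAt_right hint.intervalIntegrable
      hφc.aestronglyMeasurable.stronglyMeasurableAtFilter hφc.continuousAt
  have := ((hFTC.const_add (∫ u in Iic (0:ℝ), φ u)).const_sub (∫ u, φ u)).const_mul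
      (Real.sqrt (2 * Real.pi))⁻¹
  refine this.congr_deriv ?_
  simp only [hφ]
  ring

lemma gaussQ_continuous : Continuous gaussQ :=
  continuous_iff_continuousAt.2 fun x => (gaussQ_hasDerivAt x).continuousAt

lemma gaussQ_deriv (x : ℝ) :
    deriv gaussQ x = -((Real.sqrt (2 * Real.pi))⁻¹ * Real.exp (-x ^ 2 / 2)) :=
  (gaussQ_hasDerivAt x).deriv

lemma gaussQ_antitone : Antitone gaussQ := by
  apply antitone_of_deriv_nonpos
  · exact fun x => (gaussQ_hasDerivAt x).differentiableAt
  · intro x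
    rw [gaussQ_deriv]
    have : 0 ≤ (Real.sqrt (2 * Real.pi))⁻¹ * Real.exp (-x ^ 2 / 2) :=
      mul_nonneg (inv_nonneg.2 (Real.sqrt_nonneg _)) (Real.exp_pos _).le
    linarith

lemma gaussQ_zero : gaussQ 0 = 1 / 2 := by
  unfold gaussQ
  have h : ∀ u : ℝ, Real.exp (-u ^ 2 / 2) = Real.exp (-(1/2) * u ^ 2) := by
    intro u; ring_nf
  simp_rw [h]
  rw [integral_gaussian_Ioi]
  have h2 : π / (1/2 : ℝ) = 2 * π := by ring
  rw [h2]
  have h3 : (0:ℝ) < Real.sqrt (2 * π) := Real.sqrt_pos.2 (by positivity)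
  field_simp

lemma gaussQ_concaveOn_neg : ConcaveOn ℝ (Iic (0:ℝ)) gaussQ := by
  apply AntitoneOn.concaveOn_of_deriv (convex_Iic 0) gaussQ_continuous.continuousOn
  · exact fun x _ => ((gaussQ_hasDerivAt x).differentiableAt).differentiableWithinAt
  · intro x hx y hy hxy
    rw [interior_Iic] at hx hy
    rw [gaussQ_deriv, gaussQ_deriv]
    have hsq : y ^ 2 ≤ x ^ 2 := by nlinarith [hx.out, hy.out]
    have : Real.exp (-x ^ 2 / 2) ≤ Real.exp (-y ^ 2 / 2) := by
      apply Real.exp_le_exp.2; linarith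
    have hc : 0 ≤ (Real.sqrt (2 * Real.pi))⁻¹ := inv_nonneg.2 (Real.sqrt_nonneg _)
    nlinarith


lemma comp_concave_of_convex {s t : Set ℝ} {g f : ℝ → ℝ}
    (hg : ConcaveOn ℝ t g) (hg' : AntitoneOn g t) (hf : ConvexOn ℝ s f)
    (hmaps : Set.MapsTo f s t) : ConcaveOn ℝ s (fun x => g (f x)) := by
  refine ⟨hf.1, fun x hx y hy a b ha hb hab => ?_⟩
  have h1 : f (a • x + b • y) ≤ a • f x + b • f y := hf.2 hx hy ha hb hab
  have hfx := hmaps hx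
  have hfy := hmaps hy
  have h2 : a • f x + b • f y ∈ t := hg.1 hfx hfy ha hb hab
  have h3 : f (a • x + b • y) ∈ t := hmaps (hf.1 hx hy ha hb hab)
  calc a • g (f x) + b • g (f y) ≤ g (a • f x + b • f y) := hg.2 hfx hfy ha hb hab
    _ ≤ g (f (a • x + b • y)) := hg' h3 h2 h1

/-- For each `d ≥ 1`, `x ↦ g(x·d)` is concave on `[0,1]` (with `Δδ < 0`, `σ > 0`,
`0 ≤ ρ < 1`, `1/2 < β < 1`), and hence the return function
`v(d,x) = g(x·d) - g(1)` is concave in `x`. -/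
theorem g_comp_concave (Δδ σ ρ β Qinvβ : ℝ)
    (hΔδ : Δδ < 0) (hσ : 0 < σ) (hρ0 : 0 ≤ ρ) (hρ1 : ρ < 1)
    (hβ0 : 1 / 2 < β) (hβ1 : β < 1) (hQinv : gaussQ Qinvβ = β)
    (d : ℝ) (hd : 1 ≤ d) :
    ConcaveOn ℝ (Set.Icc (0 : ℝ) 1) (fun x : ℝ => gFun Δδ σ ρ Qinvβ (x * d)) ∧
    ConcaveOn ℝ (Set.Icc (0 : ℝ) 1)
      (fun x : ℝ => gFun Δδ σ ρ Qinvβ (x * d) - gFun Δδ σ ρ Qinvβ 1) := by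
  have hρ1' : (0:ℝ) < 1 + ρ := by linarith
  have hd0 : (0:ℝ) < d := by linarith
  -- Q⁻¹(β) < 0
  have hQneg : Qinvβ < 0 := by
    by_contra h
    push_neg at h
    have := gaussQ_antitone h
    rw [hQinv, gaussQ_zero] at this
    linarith
  set u : ℝ → ℝ := fun x => ((1 - ρ) * (x * d) + 2 * ρ) / (1 + ρ) with hu
  set f : ℝ → ℝ := fun x => Δδ / σ * Real.sqrt (u x) + Qinvβ with hf
  have hu_nonneg : ∀ x ∈ Set.Icc (0:ℝ) 1, 0 ≤ u x := by
    intro x hx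
    have hx0 := hx.1
    have h1 : 0 ≤ (1 - ρ) * (x * d) :=
      mul_nonneg (by linarith) (mul_nonneg hx0 hd0.le)
    exact div_nonneg (by linarith) hρ1'.le
  have hu_mono : ∀ x y : ℝ, x ≤ y → u x ≤ u y := by
    intro x y hxy
    have hnum : (1 - ρ) * (x * d) + 2 * ρ ≤ (1 - ρ) * (y * d) + 2 * ρ := by
      nlinarith [mul_nonneg (mul_nonneg (by linarith : (0:ℝ) ≤ 1 - ρ) hd0.le)
        (by linarith : (0:ℝ) ≤ y - x)]
    exact div_le_div_of_nonneg_right hnum hρ1'.le |>.trans_eq rfl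
  -- u is affine in the convex-combination sense
  have hu_aff : ∀ (x y a b : ℝ), a + b = 1 → u (a * x + b * y) = a * u x + b * u y := by
    intro x y a b hab
    simp only [hu]
    field_simp
    nlinarith [hab]
  -- concavity of √ ∘ u on [0,1]
  have hsqrtu : ConcaveOn ℝ (Set.Icc (0:ℝ) 1) (fun x => Real.sqrt (u x)) := by
    refine ⟨convex_Icc 0 1, fun x hx y hy a b ha hb hab => ?_⟩
    have hux := hu_nonneg x hx
    have huy := hu_nonneg y hy
    simpa [smul_eq_mul, hu_aff x y a b hab] using
      Real.strictConcaveOn_sqrt.concaveOn.2 hux huy ha hb hab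
  -- f is convex on [0,1]
  have hcoef : 0 ≤ -(Δδ / σ) := by
    have : Δδ / σ ≤ 0 := div_nonpos_of_nonpos_of_nonneg hΔδ.le hσ.le
    linarith
  have hfconv : ConvexOn ℝ (Set.Icc (0:ℝ) 1) f := by
    have h1 := ((hsqrtu.smul hcoef).neg).add_const Qinvβ
    refine h1.congr (fun x _ => ?_)
    simp only [hf, Pi.add_apply, Pi.neg_apply, Pi.smul_apply, smul_eq_mul]
    ring
  -- f is antitone on [0,1]
  have hfanti : AntitoneOn f (Set.Icc (0:ℝ) 1) := by
    intro x hx y hy hxy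
    have h1 : Real.sqrt (u x) ≤ Real.sqrt (u y) := Real.sqrt_le_sqrt (hu_mono x y hxy)
    have h2 : Δδ / σ * Real.sqrt (u y) ≤ Δδ / σ * Real.sqrt (u x) :=
      mul_le_mul_of_nonpos_left h1 (by linarith)
    simp only [hf]
    linarith
  -- f maps into Iic 0
  have hfmaps : Set.MapsTo f (Set.Icc (0:ℝ) 1) (Set.Iic (0:ℝ)) := by
    intro x _
    have h1 : Δδ / σ * Real.sqrt (u x) ≤ 0 :=
      mul_nonpos_of_nonpos_of_nonneg (by linarith) (Real.sqrt_nonneg _)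
    simp only [hf, Set.mem_Iic]
    linarith
  have hmain : ConcaveOn ℝ (Set.Icc (0:ℝ) 1) (fun x : ℝ => gFun Δδ σ ρ Qinvβ (x * d)) := by
    have h := comp_concave_of_convex gaussQ_concaveOn_neg
      (gaussQ_antitone.antitoneOn _) hfconv hfmaps
    exact h
  refine ⟨hmain, ?_⟩
  exact hmain.sub (convexOn_const _ (convex_Icc 0 1))
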